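/- Let X be a completely regular (Tychonoff) topological space such that for every countable set A ⊆ X there exists a continuous mapping φ : C_p*(A) → C_p(X) with φ(y)|_A = y for every y ∈ C_p*(A). Then every countable subset A of X is strongly functionally discrete in X. -/

import Mathlib

open Set Topology

/-- `C_p(X)`: the continuous real-valued functions on `X`, topologized by pointwise
convergence (i.e. as a subspace of `X → ℝ` with the product topology). -/
abbrev Cp (X : Type*) [TopologicalSpace X] : Type _ := {f : X → ℝ // Continuous f}

/-- `C_p*(X)`: the bounded continuous real-valued functions on `X`, topologized by
pointwise convergence. -/
abbrev CpStar (X : Type*) [TopologicalSpace X] : Type _ :=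
  {f : X → ℝ // Continuous f ∧ ∃ M : ℝ, ∀ x, |f x| ≤ M}

/-- A set is functionally open (a cozero set) if it is the cozero set of a
continuous real-valued function. -/
def FunctionallyOpen {X : Type*} [TopologicalSpace X] (U : Set X) : Prop :=
  ∃ f : X → ℝ, Continuous f ∧ U = f ⁻¹' ({0}ᶜ)

/-- A subset `A` is strongly functionally discrete in `X` if there is a family of
functionally open sets `G a ∋ a` (for `a ∈ A`) which is discrete in `X`: every point
of `X` has a neighborhood meeting `G a` for at most one `a ∈ A`. -/
def StronglyFunctionallyDiscrete {X : Type*} [TopologicalSpace X] (A : Set X) : Prop :=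
  ∃ G : A → Set X,
    (∀ a : A, (a : X) ∈ G a) ∧
    (∀ a : A, FunctionallyOpen (G a)) ∧
    (∀ x : X, ∃ V ∈ 𝓝 x, {a : A | (V ∩ G a).Nonempty}.Subsingleton)

open Filter

namespace Stmt10Aux

lemma max_ne_zero_iff' {t : ℝ} : max t 0 ≠ 0 ↔ 0 < t := by
  constructor
  · intro h
    by_contra hc
    push_neg at hc
    exact h (max_eq_right hc)
  · intro h
    rw [max_eq_left h.le]
    exact ne_of_gt h

/-- Iterated minimum of a sequence of functions. -/
noncomputable def iMin {X : Type*} (g : ℕ → X → ℝ) : ℕ → X → ℝ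
  | 0 => g 0
  | (k+1) => fun x => min (iMin g k x) (g (k+1) x)

/-- Abstract criterion for strong functional discreteness. -/
theorem key {X : Type*} [TopologicalSpace X] (A : Set X) (e : A → ℕ)
    (he : Function.Injective e) (H : ℕ → X → ℝ)
    (Hc : ∀ k, Continuous (H k))
    (Hanti : ∀ (x : X) {k l : ℕ}, k ≤ l → H l x ≤ H k x)
    (h1 : ∀ a : A, (2:ℝ)/3 < H (e a) a)
    (h2 : ∀ a : A, H (e a + 1) (a : X) < 1/3)
    (hsm : ∀ x : X, ∃ k, H k x < 1/2) :
    StronglyFunctionallyDiscrete A := by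
  classical
  refine ⟨fun a => {x | 2/3 < H (e a) x ∧ H (e a + 1) x < 1/3},
    fun a => ⟨h1 a, h2 a⟩, ?_, ?_⟩
  · intro a
    refine ⟨fun x => max (H (e a) x - 2/3) 0 * max (1/3 - H (e a + 1) x) 0,
      (((Hc (e a)).sub continuous_const).max continuous_const).mul
        ((continuous_const.sub (Hc (e a + 1))).max continuous_const), ?_⟩
    ext x
    simp only [mem_setOf_eq, mem_preimage, mem_compl_iff, mem_singleton_iff]
    rw [← ne_eq, mul_ne_zero_iff, max_ne_zero_iff', max_ne_zero_iff']
    constructor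
    · rintro ⟨p, q⟩
      exact ⟨by linarith, by linarith⟩
    · rintro ⟨p, q⟩
      exact ⟨by linarith, by linarith⟩
  · intro x
    have hex : ∃ k, H k x < 1/2 := hsm x
    set K := Nat.find hex with hKdef
    have hKlt : H K x < 1/2 := Nat.find_spec hex
    have hKmin : ∀ j, j < K → ¬ H j x < 1/2 := fun j hj => Nat.find_min hex hj
    refine ⟨{y | H K y < 1/2} ∩ ⋂ j ∈ Finset.range K, {y | 1/3 < H j y}, ?_, ?_⟩
    · refine IsOpen.mem_nhds ?_ ⟨hKlt, ?_⟩
      · exact (isOpen_lt (Hc K) continuous_const).inter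
          (isOpen_biInter_finset fun j _ => isOpen_lt continuous_const (Hc j))
      · refine mem_iInter₂.2 fun j hj => ?_
        have := not_lt.1 (hKmin j (Finset.mem_range.1 hj))
        show (1:ℝ)/3 < H j x
        linarith
    · have hkey : ∀ c : A,
          (({y | H K y < 1/2} ∩ ⋂ j ∈ Finset.range K, {y | 1/3 < H j y}) ∩
            {x | 2/3 < H (e c) x ∧ H (e c + 1) x < 1/3}).Nonempty → e c + 1 = K := by
        rintro c ⟨y, ⟨⟨hyK, hyI⟩, hy1, hy2⟩⟩
        simp only [mem_setOf_eq] at hyK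
        have hnK : ¬ K ≤ e c := by
          intro hle
          have := Hanti y hle
          linarith
        have hn1 : ¬ e c + 1 < K := by
          intro hlt
          have := mem_iInter₂.1 hyI (e c + 1) (Finset.mem_range.2 hlt)
          simp only [mem_setOf_eq] at this
          linarith
        omega
      intro a ha b hb
      exact he (by have h1 := hkey a ha; have h2 := hkey b hb; omega)

/-- Under the extender hypothesis, countable sets contain all the points of
their closure (applied below to `A \ {a}`). -/
theorem extender_closed {X : Type*} [TopologicalSpace X] [T35Space X]
    (h : ∀ A : Set X, A.Countable → ∃ φ : CpStar A → Cp X, Continuous φ ∧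
      ∀ y : CpStar A, ∀ a : A, (φ y).1 a = y.1 a)
    (S : Set X) (hS : S.Countable) (a : X) (ha : a ∉ S) : a ∉ closure S := by
  intro hacl
  obtain ⟨σ, hσ⟩ := hS.exists_eq_range (closure_nonempty_iff.1 ⟨a, hacl⟩)
  obtain ⟨φ, hφc, hφe⟩ := h S hS
  have hbuild : ∀ k : ℕ, ∃ v : X → ℝ, Continuous v ∧ (∀ x, 0 ≤ v x ∧ v x ≤ 1) ∧
      (∀ i, i < k → v (σ i) = 0) ∧ ∃ V : Set X, IsOpen V ∧ a ∈ V ∧ ∀ x ∈ V, v x = 1 := by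
    intro k
    have hFfin : (σ '' Iio k).Finite := (Set.finite_Iio k).image σ
    have haF : a ∉ σ '' Iio k := by
      rintro ⟨i, -, rfl⟩
      exact ha (hσ ▸ mem_range_self i)
    obtain ⟨f, hfc, hf0, hf1⟩ :=
      CompletelyRegularSpace.completely_regular a _ hFfin.isClosed haF
    have hfcR : Continuous fun x => (f x : ℝ) := continuous_subtype_val.comp hfc
    refine ⟨fun x => min 1 (max 0 (4 * (1 - (f x : ℝ)) - 2)), ?_, ?_, ?_,
      {x | (f x : ℝ) < 1/4}, isOpen_lt hfcR continuous_const, ?_, ?_⟩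
    · exact continuous_const.min (continuous_const.max
        (((continuous_const.mul (continuous_const.sub hfcR)).sub continuous_const)))
    · intro x
      exact ⟨le_min zero_le_one (le_max_left _ _), min_le_left _ _⟩
    · intro i hi
      have h1 : f (σ i) = 1 := hf1 ⟨i, mem_Iio.2 hi, rfl⟩
      have h1R : (f (σ i) : ℝ) = 1 := by rw [h1]; rfl
      dsimp only
      rw [h1R, show (4 * ((1:ℝ) - 1) - 2) = -2 by ring,
        max_eq_left (by norm_num : (-2:ℝ) ≤ 0), min_eq_right (by norm_num : (0:ℝ) ≤ 1)]
    · show (f a : ℝ) < 1/4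
      rw [hf0]
      norm_num [Set.Icc.coe_zero]
    · intro x hx
      have hx' : (f x : ℝ) < 1/4 := hx
      have ht : (1:ℝ) ≤ 4 * (1 - (f x : ℝ)) - 2 := by linarith
      dsimp only
      rw [max_eq_right (by linarith : (0:ℝ) ≤ 4 * (1 - (f x : ℝ)) - 2)]
      exact min_eq_left ht
  choose v hvc hvb hv0 V hVo haV hvV using hbuild
  have hymem : ∀ k, Continuous (fun s : S => v k s.1) ∧ ∃ M, ∀ s : S, |v k s.1| ≤ M :=
    fun k => ⟨(hvc k).comp continuous_subtype_val, 1,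
      fun s => abs_le.2 ⟨by linarith [(hvb k s.1).1], (hvb k s.1).2⟩⟩
  let y : ℕ → CpStar S := fun k => ⟨fun s => v k s.1, (hymem k).1, (hymem k).2⟩
  let z0 : CpStar S := ⟨fun _ => 0, continuous_const, 0, fun s => by simp⟩
  have hy0 : Tendsto y atTop (𝓝 z0) := by
    rw [tendsto_subtype_rng, tendsto_pi_nhds]
    intro s
    obtain ⟨i, hi⟩ : ∃ i, σ i = s.1 := by
      have hs : (s : X) ∈ range σ := by rw [← hσ]; exact s.2
      exact hs
    refine Tendsto.congr' ?_ tendsto_const_nhds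
    filter_upwards [eventually_gt_atTop i] with k hk
    show (0:ℝ) = (y k).1 s
    show (0:ℝ) = v k s.1
    rw [← hi, hv0 k i hk]
  have hval1 : ∀ k, (φ (y k)).1 a = 1 := by
    intro k
    have heq : Set.EqOn (φ (y k)).1 (fun _ => (1:ℝ)) (V k ∩ S) := by
      intro p hp
      have h1 := hφe (y k) ⟨p, hp.2⟩
      show (φ (y k)).1 p = 1
      rw [h1]
      exact hvV k p hp.1
    have hacl2 : a ∈ closure (V k ∩ S) := by
      rw [mem_closure_iff] at hacl ⊢
      intro O hO haO
      obtain ⟨p, hpO, hpS⟩ := hacl (O ∩ V k) (hO.inter (hVo k)) ⟨haO, haV k⟩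
      exact ⟨p, hpO.1, hpO.2, hpS⟩
    exact heq.closure (φ (y k)).2 continuous_const hacl2
  have hval0 : (φ z0).1 a = 0 := by
    have heq : Set.EqOn (φ z0).1 (fun _ => (0:ℝ)) S := fun p hp => hφe z0 ⟨p, hp⟩
    exact heq.closure (φ z0).2 continuous_const hacl
  have hev : Continuous (fun ψ : Cp X => ψ.1 a) :=
    (continuous_apply a).comp continuous_subtype_val
  have htend : Tendsto (fun k => (φ (y k)).1 a) atTop (𝓝 ((φ z0).1 a)) :=
    (hev.tendsto (φ z0)).comp ((hφc.tendsto z0).comp hy0)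
  rw [hval0] at htend
  have hone : Tendsto (fun _ : ℕ => (1:ℝ)) atTop (𝓝 0) := htend.congr fun k => hval1 k
  exact one_ne_zero (tendsto_nhds_unique tendsto_const_nhds hone)

end Stmt10Aux

/-- If `X` is completely regular (Tychonoff) and for every countable `A ⊆ X` there is
a continuous extender `C_p*(A) → C_p(X)`, then every countable subset of `X` is
strongly functionally discrete in `X`. -/
theorem stmt_10 {X : Type*} [TopologicalSpace X] [T35Space X]
    (h : ∀ A : Set X, A.Countable → ∃ φ : CpStar A → Cp X, Continuous φ ∧
      ∀ y : CpStar A, ∀ a : A, (φ y).1 a = y.1 a) :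
    ∀ A : Set X, A.Countable → StronglyFunctionallyDiscrete A := by
  intro A hA
  classical
  -- `A` is a discrete subspace
  have hiso : ∀ a : A, ∃ U : Set X, IsOpen U ∧ (a : X) ∈ U ∧ ∀ b : A, (b : X) ∈ U → b = a := by
    intro a
    have h1 : (a : X) ∉ closure (A \ {(a : X)}) :=
      Stmt10Aux.extender_closed h _ (hA.mono diff_subset) _ (fun hx => hx.2 rfl)
    refine ⟨(closure (A \ {(a : X)}))ᶜ, isClosed_closure.isOpen_compl, h1, ?_⟩
    intro b hb
    by_contra hne
    exact hb (subset_closure ⟨b.2, fun hbx => hne (Subtype.ext hbx)⟩)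
  haveI hdisc : DiscreteTopology A := by
    rw [discreteTopology_iff_isOpen_singleton]
    intro a
    obtain ⟨U, hUo, haU, hU⟩ := hiso a
    have hset : {a} = (Subtype.val ⁻¹' U : Set A) := by
      ext b
      simp only [mem_singleton_iff, mem_preimage]
      exact ⟨fun hba => hba ▸ haU, fun hb => hU b hb⟩
    rw [hset]
    exact hUo.preimage continuous_subtype_val
  haveI hct : Countable A := hA.to_subtype
  obtain ⟨e, he⟩ := Countable.exists_injective_nat A
  obtain ⟨φ, hφc, hφe⟩ := h A hA
  let z : ℕ → CpStar A := fun k =>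
    ⟨fun b => if k ≤ e b then (1:ℝ) else 0, continuous_of_discreteTopology,
      1, fun b => by dsimp only; split <;> norm_num⟩
  let z0 : CpStar A := ⟨fun _ => 0, continuous_const, 0, fun b => by simp⟩
  let g : ℕ → X → ℝ := fun k x => (φ (z k)).1 x - (φ z0).1 x
  have hgc : ∀ k, Continuous (g k) := fun k => ((φ (z k)).2).sub ((φ z0).2)
  have hgA : ∀ (k : ℕ) (b : A), g k (b : X) = if k ≤ e b then (1:ℝ) else 0 := by
    intro k b
    show (φ (z k)).1 (b : X) - (φ z0).1 (b : X) = _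
    rw [hφe (z k) b, hφe z0 b]
    show (if k ≤ e b then (1:ℝ) else 0) - 0 = _
    ring
  have hg0 : ∀ x : X, Filter.Tendsto (fun k => g k x) Filter.atTop (𝓝 0) := by
    intro x
    have hztend : Filter.Tendsto z Filter.atTop (𝓝 z0) := by
      rw [tendsto_subtype_rng, tendsto_pi_nhds]
      intro b
      refine Filter.Tendsto.congr' ?_ tendsto_const_nhds
      filter_upwards [Filter.eventually_gt_atTop (e b)] with k hk
      show (0:ℝ) = (z k).1 b
      show (0:ℝ) = if k ≤ e b then (1:ℝ) else 0
      rw [if_neg (Nat.not_le.2 hk)]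
    have hev : Continuous (fun ψ : Cp X => ψ.1 x) :=
      (continuous_apply x).comp continuous_subtype_val
    have h1 := (hev.tendsto (φ z0)).comp ((hφc.tendsto z0).comp hztend)
    have h2 := h1.sub (tendsto_const_nhds (x := (φ z0).1 x) (f := Filter.atTop (α := ℕ)))
    simpa using h2
  -- the iterated minima
  have Hc : ∀ k, Continuous (Stmt10Aux.iMin g k) := by
    intro k
    induction k with
    | zero => exact hgc 0
    | succ n ih => exact ih.min (hgc (n+1))
  have Hanti : ∀ (x : X) {k l : ℕ}, k ≤ l → Stmt10Aux.iMin g l x ≤ Stmt10Aux.iMin g k x := by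
    intro x k l hkl
    have Hsucc : ∀ n : ℕ, Stmt10Aux.iMin g (n+1) x ≤ Stmt10Aux.iMin g n x := fun n =>
      min_le_left (Stmt10Aux.iMin g n x) (g (n+1) x)
    exact antitone_nat_of_succ_le (f := fun n => Stmt10Aux.iMin g n x) Hsucc hkl
  have HleG : ∀ (k : ℕ) (x : X), Stmt10Aux.iMin g k x ≤ g k x := by
    intro k x
    cases k with
    | zero => exact le_refl _
    | succ n => exact min_le_right _ _
  have Hval1 : ∀ a : A, Stmt10Aux.iMin g (e a) (a : X) = 1 := by
    intro a
    have haux : ∀ k, k ≤ e a → Stmt10Aux.iMin g k (a : X) = 1 := by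
      intro k
      induction k with
      | zero =>
        intro _
        show g 0 (a : X) = 1
        rw [hgA 0 a, if_pos (Nat.zero_le _)]
      | succ n ih =>
        intro hle
        have h1 : Stmt10Aux.iMin g n (a : X) = 1 := ih (Nat.le_of_succ_le hle)
        have h2 : g (n+1) (a : X) = 1 := by rw [hgA, if_pos hle]
        show min (Stmt10Aux.iMin g n (a : X)) (g (n+1) (a : X)) = 1
        rw [h1, h2, min_self]
    exact haux (e a) le_rfl
  have Hval2 : ∀ a : A, Stmt10Aux.iMin g (e a + 1) (a : X) = 0 := by
    intro a
    show min (Stmt10Aux.iMin g (e a) (a : X)) (g (e a + 1) (a : X)) = 0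
    rw [Hval1 a, hgA, if_neg (by omega)]
    exact min_eq_right (by norm_num)
  have hsm : ∀ x : X, ∃ k, Stmt10Aux.iMin g k x < 1/2 := by
    intro x
    obtain ⟨k, hk⟩ := ((hg0 x).eventually_lt_const (by norm_num : (0:ℝ) < 1/2)).exists
    exact ⟨k, lt_of_le_of_lt (HleG k x) hk⟩
  exact Stmt10Aux.key A e he (Stmt10Aux.iMin g) Hc Hanti
    (fun a => by rw [Hval1 a]; norm_num) (fun a => by rw [Hval2 a]; norm_num) hsm
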